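/- Suppose a_0 = 0 and for each t ≥ 0, either a_{t+1} = a_t + y_{k(t)} with a_t · y_{k(t)} ≤ λ t and ‖y_{k(t)}‖ ≤ R, or a_{t+1} = a_t. Then for all t ≥ 1, ‖a_t‖² ≤ (R² − λ) t + λ t². -/

import Mathlib

theorem telescoped_norm_bound
    (d : ℕ) (lam R : ℝ) (hlam : 0 < lam) (hR : 0 < R)
    (a y : ℕ → EuclideanSpace ℝ (Fin d))
    (ha0 : a 0 = 0)
    (hstep : ∀ t : ℕ,
      (a (t+1) = a t + y t ∧ (inner ℝ (a t) (y t) : ℝ) ≤ lam * (t : ℝ) ∧ ‖y t‖ ≤ R) ∨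
      a (t+1) = a t) :
    ∀ t : ℕ, 1 ≤ t → ‖a t‖^2 ≤ (R^2 - lam) * (t : ℝ) + lam * (t : ℝ)^2 := by
  have key : ∀ t : ℕ, ‖a t‖^2 ≤ (R^2 - lam) * (t : ℝ) + lam * (t : ℝ)^2 := by
    intro t
    induction t with
    | zero => simp [ha0]
    | succ n ih =>
      rcases hstep n with ⟨heq, hip, hy⟩ | heq
      · have hexp : ‖a (n+1)‖^2 = ‖a n‖^2 + 2 * (inner ℝ (a n) (y n) : ℝ) + ‖y n‖^2 := by
          rw [heq]
          rw [@norm_add_sq_real]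
        have hy2 : ‖y n‖^2 ≤ R^2 := by
          have := norm_nonneg (y n)
          nlinarith
        push_cast
        rw [hexp]
        push_cast at ih
        nlinarith
      · rw [heq]
        push_cast
        push_cast at ih
        nlinarith [hlam.le, ih, sq_nonneg (n:ℝ)]
  exact fun t _ => key t
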